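/- There exists a closed set B ⊆ ℝ² with dimH B = 1 such that for every (x,y) ∈ ℝ² there exists r > 0 with the boundary of the axes-parallel square with center (x,y) and radius r contained in B. -/

import Mathlib

open Set MeasureTheory Filter Topology
open scoped ENNReal NNReal

namespace SqAux

noncomputable section

/-- Rapidly decreasing scale sequence. -/
def q (n : ℕ) : ℝ := (1/2 : ℝ) ^ (Nat.factorial (n+1))

lemma q_pos (n : ℕ) : 0 < q n := by unfold q; positivity

lemma q_le_one (n : ℕ) : q n ≤ 1 := by
  unfold q
  exact pow_le_one₀ (by norm_num) (by norm_num)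

lemma factorial_add_le (N m : ℕ) : Nat.factorial (N+1) + m ≤ Nat.factorial (N+m+1) := by
  induction m with
  | zero => simp
  | succ m ih =>
    have h1 : Nat.factorial (N+m+1) + 1 ≤ Nat.factorial (N+m+1+1) := by
      have hp := Nat.factorial_pos (N+m+1)
      have h2 : Nat.factorial (N+m+1+1) = (N+m+1+1) * Nat.factorial (N+m+1) := rfl
      nlinarith
    have : N+(m+1)+1 = N+m+1+1 := by omega
    rw [this]
    omega

lemma q_add_le (N m : ℕ) : q (N+m) ≤ q N * (1/2:ℝ)^m := by
  unfold q
  rw [← pow_add]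
  apply pow_le_pow_of_le_one (by norm_num) (by norm_num)
  have := factorial_add_le N m
  omega

/-- The four basic closed sets. `E i` consists of reals that are within `q (n+1)` of a
multiple of `q n` for every `n ≡ i [MOD 4]`. -/
def E (i : ℕ) : Set ℝ := {x | ∀ n : ℕ, n % 4 = i → ∃ m : ℤ, |x - m * q n| ≤ q (n+1)}

lemma zero_mem_E (i : ℕ) : (0:ℝ) ∈ E i := by
  intro n _
  exact ⟨0, by simpa using (q_pos (n+1)).le⟩

lemma neg_mem_E {i : ℕ} {x : ℝ} (hx : x ∈ E i) : -x ∈ E i := by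
  intro n hn
  obtain ⟨m, hm⟩ := hx n hn
  exact ⟨-m, by rw [← abs_neg]; push_cast; convert hm using 2; ring⟩

lemma isClosed_lattice_nbhd (qq ε : ℝ) (hq : 0 < qq) :
    IsClosed {x : ℝ | ∃ m : ℤ, |x - m * qq| ≤ ε} := by
  rw [← isOpen_compl_iff, Metric.isOpen_iff]
  intro x hx
  simp only [mem_compl_iff, mem_setOf_eq, not_exists, not_le] at hx
  set m₀ : ℤ := round (x / qq) with hm₀
  have hkey : ∀ m : ℤ, |x - m₀ * qq| ≤ |x - m * qq| := by
    intro m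
    have h1 : |x / qq - m₀| ≤ |x / qq - m| := round_le (x / qq) m
    have h2 : ∀ z : ℤ, |x / qq - z| * qq = |x - z * qq| := by
      intro z
      have hz : x - z * qq = (x / qq - z) * qq := by field_simp
      rw [hz, abs_mul, abs_of_pos hq]
    calc |x - m₀ * qq| = |x / qq - m₀| * qq := (h2 m₀).symm
      _ ≤ |x / qq - m| * qq := by nlinarith [abs_nonneg (x / qq - (m:ℝ)), abs_nonneg (x/qq - (m₀:ℝ))]
      _ = |x - m * qq| := h2 m
  refine ⟨|x - m₀ * qq| - ε, by linarith [hx m₀], fun y hy => ?_⟩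
  simp only [mem_compl_iff, mem_setOf_eq, not_exists, not_le]
  intro m
  rw [Metric.mem_ball, Real.dist_eq] at hy
  have h3 := hkey m
  have h4 : |x - m * qq| ≤ |x - y| + |y - m * qq| := by
    calc |x - m * qq| = |(x - y) + (y - m * qq)| := by ring_nf
      _ ≤ |x - y| + |y - m * qq| := abs_add_le _ _
  have := abs_sub_comm y x
  nlinarith [abs_nonneg (y - m * qq)]

lemma isClosed_E (i : ℕ) : IsClosed (E i) := by
  have : E i = ⋂ n : ℕ, {x : ℝ | n % 4 = i → ∃ m : ℤ, |x - m * q n| ≤ q (n+1)} := by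
    ext x; simp [E, Set.mem_iInter]
  rw [this]
  refine isClosed_iInter fun n => ?_
  by_cases hn : n % 4 = i
  · have : {x : ℝ | n % 4 = i → ∃ m : ℤ, |x - m * q n| ≤ q (n+1)}
        = {x : ℝ | ∃ m : ℤ, |x - m * q n| ≤ q (n+1)} := by
      ext x; simp [hn]
    rw [this]
    exact isClosed_lattice_nbhd _ _ (q_pos n)
  · have : {x : ℝ | n % 4 = i → ∃ m : ℤ, |x - m * q n| ≤ q (n+1)} = univ := by
      ext x; simp [hn]
    rw [this]
    exact isClosed_univ

/-- The union set. -/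
def C : Set ℝ := E 0 ∪ E 1 ∪ E 2 ∪ E 3

lemma isClosed_C : IsClosed C :=
  (((isClosed_E 0).union (isClosed_E 1)).union (isClosed_E 2)).union (isClosed_E 3)

lemma zero_mem_C : (0:ℝ) ∈ C := Or.inl (Or.inl (Or.inl (zero_mem_E 0)))

/-- The big set in the plane. -/
def B : Set (ℝ × ℝ) := C ×ˢ (univ : Set ℝ) ∪ (univ : Set ℝ) ×ˢ C

lemma isClosed_B : IsClosed B :=
  (isClosed_C.prod isClosed_univ).union (isClosed_univ.prod isClosed_C)

/-! ### Construction of the radius -/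

/-- The successive-correction sequence. -/
def Rseq (a : ℕ → ℝ) : ℕ → ℝ
  | 0 => 1
  | n+1 => Rseq a n + ((round ((Rseq a n + a n) / q n) : ℝ) * q n - (Rseq a n + a n))

lemma Rseq_exact (a : ℕ → ℝ) (n : ℕ) :
    Rseq a (n+1) + a n = (round ((Rseq a n + a n) / q n) : ℝ) * q n := by
  show Rseq a n + ((round ((Rseq a n + a n) / q n) : ℝ) * q n - (Rseq a n + a n)) + a n = _
  ring

lemma Rseq_step (a : ℕ → ℝ) (n : ℕ) : |Rseq a (n+1) - Rseq a n| ≤ q n / 2 := by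
  have h1 : Rseq a (n+1) - Rseq a n
      = ((round ((Rseq a n + a n) / q n) : ℝ) - (Rseq a n + a n) / q n) * q n := by
    have hq := (q_pos n).ne'
    show Rseq a n + ((round ((Rseq a n + a n) / q n) : ℝ) * q n - (Rseq a n + a n)) - Rseq a n = _
    field_simp
    ring
  rw [h1, abs_mul, abs_of_pos (q_pos n)]
  have h2 : |(round ((Rseq a n + a n) / q n) : ℝ) - (Rseq a n + a n) / q n| ≤ 1/2 := by
    rw [abs_sub_comm]
    exact abs_sub_round _
  nlinarith [q_pos n, abs_nonneg ((round ((Rseq a n + a n) / q n) : ℝ) - (Rseq a n + a n) / q n)]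

lemma q_le_geom (n : ℕ) : q n ≤ (1/2:ℝ)^(n+1) := by
  unfold q
  apply pow_le_pow_of_le_one (by norm_num) (by norm_num)
  exact Nat.succ_le_of_lt (Nat.lt_of_lt_of_le (Nat.lt_succ_self n) (Nat.self_le_factorial _))

lemma Rseq_lim (a : ℕ → ℝ) :
    ∃ r : ℝ, Tendsto (Rseq a) atTop (𝓝 r) ∧ ∀ N, dist (Rseq a N) r ≤ q N := by
  have hstep : ∀ n, dist (Rseq a n) (Rseq a (n+1)) ≤ q n / 2 := by
    intro n
    rw [dist_comm, Real.dist_eq]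
    exact Rseq_step a n
  have hcauchy : CauchySeq (Rseq a) := by
    refine cauchySeq_of_le_geometric (1/2) 1 (by norm_num) fun n => ?_
    calc dist (Rseq a n) (Rseq a (n+1)) ≤ q n / 2 := hstep n
      _ ≤ (1/2:ℝ)^(n+1) / 2 := by linarith [q_le_geom n]
      _ ≤ 1 * (1/2:ℝ)^n := by
          rw [pow_succ]
          nlinarith [pow_pos (by norm_num : (0:ℝ) < 1/2) n]
  obtain ⟨r, hr⟩ := cauchySeq_tendsto_of_complete hcauchy
  refine ⟨r, hr, fun N => ?_⟩
  have hsum : Summable (fun n => q n / 2) := by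
    apply Summable.of_nonneg_of_le (fun n => by linarith [q_pos n])
      (fun n => ?_) (summable_geometric_of_lt_one (by norm_num) (by norm_num) : Summable fun n => (1/2:ℝ)^n)
    calc q n / 2 ≤ (1/2:ℝ)^(n+1)/2 := by linarith [q_le_geom n]
      _ ≤ (1/2:ℝ)^n := by
          rw [pow_succ]
          nlinarith [pow_pos (by norm_num : (0:ℝ) < 1/2) n]
  have h1 := dist_le_tsum_of_dist_le_of_tendsto (fun n => q n / 2) hstep hsum hr N
  refine h1.trans ?_
  have h2 : ∀ m : ℕ, q (N + m) / 2 ≤ q N / 2 * (1/2:ℝ)^m := by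
    intro m
    have := q_add_le N m
    nlinarith [pow_pos (by norm_num : (0:ℝ) < 1/2) m]
  have h3 : Summable (fun m => q N / 2 * (1/2:ℝ)^m) :=
    (summable_geometric_of_lt_one (by norm_num) (by norm_num)).mul_left _
  calc ∑' m, q (N + m) / 2 ≤ ∑' m, q N / 2 * (1/2:ℝ)^m := by
        refine Summable.tsum_le_tsum h2 ?_ h3
        have := (summable_nat_add_iff N).mpr hsum
        simpa [Nat.add_comm] using this
    _ = q N / 2 * (1 - 1/2)⁻¹ := by
        rw [tsum_mul_left, tsum_geometric_of_lt_one (by norm_num) (by norm_num)]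
    _ = q N := by norm_num

theorem exists_radius (s t : ℝ) :
    ∃ r : ℝ, (1/2 : ℝ) ≤ r ∧ r + s ∈ E 0 ∧ r - s ∈ E 1 ∧ r + t ∈ E 2 ∧ r - t ∈ E 3 := by
  classical
  set a : ℕ → ℝ := fun n =>
    if n % 4 = 0 then s else if n % 4 = 1 then -s else if n % 4 = 2 then t else -t with ha
  obtain ⟨r, _, hdist⟩ := Rseq_lim a
  have hmem : ∀ n : ℕ, ∃ m : ℤ, |r + a n - m * q n| ≤ q (n+1) := by
    intro n
    refine ⟨round ((Rseq a n + a n) / q n), ?_⟩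
    have h1 := Rseq_exact a n
    have h2 := hdist (n+1)
    rw [Real.dist_eq] at h2
    have : r + a n - (round ((Rseq a n + a n) / q n) : ℝ) * q n
        = -(Rseq a (n+1) - r) := by rw [← h1]; ring
    rw [this, abs_neg]
    exact h2
  have hhalf : (1/2:ℝ) ≤ r := by
    have h0 := hdist 0
    rw [Real.dist_eq] at h0
    have hq0 : q 0 = 1/2 := by norm_num [q, Nat.factorial]
    have : Rseq a 0 = 1 := rfl
    rw [this, hq0] at h0
    cases abs_sub_le_iff.mp h0 with
    | intro h1 h2 => linarith
  refine ⟨r, hhalf, ?_, ?_, ?_, ?_⟩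
  · intro n hn
    have := hmem n
    simpa [ha, hn] using this
  · intro n hn
    have := hmem n
    have h4 : a n = -s := by simp [ha, hn]
    rw [h4] at this
    simpa [sub_eq_add_neg] using this
  · intro n hn
    have := hmem n
    have h4 : a n = t := by simp [ha, hn]
    rw [h4] at this
    simpa using this
  · intro n hn
    have := hmem n
    have h4 : a n = -t := by simp [ha, hn]
    rw [h4] at this
    simpa [sub_eq_add_neg] using this

/-! ### Dimension: upper bound -/

lemma tendsto_exponent (i : ℕ) (d : ℝ) (hd : 1 < d) :
    Tendsto (fun k : ℕ =>
      (Nat.factorial (4*k+i+2) : ℝ) * (d-1) - (Nat.factorial (4*k+i+1) : ℝ))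
      atTop atTop := by
  have key : ∀ᶠ k : ℕ in atTop, (k : ℝ) ≤
      (Nat.factorial (4*k+i+2) : ℝ) * (d-1) - (Nat.factorial (4*k+i+1) : ℝ) := by
    filter_upwards [eventually_ge_atTop ⌈2/(d-1)⌉₊] with k hk
    set n := 4*k+i with hn
    have h1 : (Nat.factorial (n+2) : ℝ) = ((n:ℝ)+2) * Nat.factorial (n+1) := by
      rw [show n+2 = (n+1)+1 from rfl, Nat.factorial_succ]
      push_cast; ring
    have h2 : (2:ℝ)/(d-1) ≤ (n:ℝ)+2 := by
      have hk' : (⌈2/(d-1)⌉₊ : ℝ) ≤ k := by exact_mod_cast hk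
      have := Nat.le_ceil (2/(d-1))
      have hkn : (k:ℝ) ≤ (n:ℝ) := by
        have : k ≤ n := by omega
        exact_mod_cast this
      linarith
    have h3 : (2:ℝ) ≤ ((n:ℝ)+2) * (d-1) := by
      rw [div_le_iff₀ (by linarith)] at h2
      linarith
    have h4 : (n:ℝ)+1 ≤ (Nat.factorial (n+1) : ℝ) := by
      exact_mod_cast Nat.self_le_factorial (n+1)
    have h5 : (1:ℝ) ≤ (Nat.factorial (n+1) : ℝ) := by linarith [Nat.cast_nonneg (α := ℝ) n]
    have hkn : (k:ℝ) ≤ (n:ℝ) := by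
      have : k ≤ n := by omega
      exact_mod_cast this
    calc (k:ℝ) ≤ (n:ℝ)+1 := by linarith
      _ ≤ (Nat.factorial (n+1) : ℝ) := h4
      _ = (Nat.factorial (n+1) : ℝ) * 2 - (Nat.factorial (n+1) : ℝ) := by ring
      _ ≤ (Nat.factorial (n+1) : ℝ) * (((n:ℝ)+2)*(d-1)) - (Nat.factorial (n+1) : ℝ) := by
          nlinarith
      _ = (Nat.factorial (n+2) : ℝ) * (d-1) - (Nat.factorial (n+1) : ℝ) := by
          rw [h1]; ring
  exact tendsto_atTop_mono' _ key tendsto_natCast_atTop_atTop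

lemma q_rpow (m : ℕ) : q m = (1/2:ℝ) ^ ((Nat.factorial (m+1) : ℝ)) := by
  unfold q; rw [Real.rpow_natCast]

lemma tendsto_ratio (i : ℕ) (d : ℝ) (hd : 1 < d) :
    Tendsto (fun k : ℕ => (q (4*k+i+1))^(d-1) / q (4*k+i)) atTop (𝓝 0) := by
  have hrw : ∀ k : ℕ, (q (4*k+i+1))^(d-1) / q (4*k+i)
      = (1/2:ℝ) ^ ((Nat.factorial (4*k+i+2) : ℝ) * (d-1) - (Nat.factorial (4*k+i+1) : ℝ)) := by
    intro k
    have e1 : (q (4*k+i+1))^(d-1) = (1/2:ℝ)^((Nat.factorial (4*k+i+2) : ℝ)*(d-1)) := by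
      rw [q_rpow, ← Real.rpow_mul (by norm_num)]
    have e2 : q (4*k+i) = (1/2:ℝ)^((Nat.factorial (4*k+i+1):ℝ)) := q_rpow _
    rw [e1, e2, ← Real.rpow_sub (by norm_num : (0:ℝ) < 1/2)]
  simp only [hrw]
  exact (tendsto_rpow_atTop_of_base_lt_one (1/2) (by norm_num) (by norm_num)).comp
    (tendsto_exponent i d hd)

theorem hausdorff_piece (i : ℕ) (hi : i < 4) (d : ℝ) (hd : 1 < d) (R : ℕ) :
    μH[d] ((E i ∩ Icc (-(R:ℝ)) R) ×ˢ (Icc (-(R:ℝ)) R)) = 0 := by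
  have hd0 : (0:ℝ) ≤ d := by linarith
  set n : ℕ → ℕ := fun k => 4*k+i with hn
  set en : ℕ → ℝ := fun k => q (n k + 1) with hen
  set K₁ : ℕ → ℕ := fun k => ⌈((R:ℝ)+1)/q (n k)⌉₊ with hK₁
  set K₂ : ℕ → ℕ := fun k => ⌈(R:ℝ)/en k⌉₊ with hK₂
  set t : ∀ k : ℕ, (Fin (2*K₁ k + 1) × Fin (K₂ k + 1)) → Set (ℝ × ℝ) := fun k ab =>
    (Icc ((((ab.1 : ℕ) : ℝ) - (K₁ k : ℝ)) * q (n k) - en k)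
         ((((ab.1 : ℕ) : ℝ) - (K₁ k : ℝ)) * q (n k) + en k)) ×ˢ
    (Icc (-(R:ℝ) + 2 * en k * (ab.2 : ℕ)) (-(R:ℝ) + 2 * en k * ((ab.2 : ℕ) + 1))) with ht
  have henpos : ∀ k, 0 < en k := fun k => q_pos _
  have hqnpos : ∀ k, 0 < q (n k) := fun k => q_pos _
  have hdiam : ∀ k ab, EMetric.diam (t k ab) ≤ ENNReal.ofReal (2 * en k) := by
    intro k ab
    apply EMetric.diam_le
    rintro ⟨p1, p2⟩ ⟨hp1, hp2⟩ ⟨p1', p2'⟩ ⟨hp1', hp2'⟩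
    simp only [mem_Icc] at hp1 hp2 hp1' hp2'
    rw [Prod.edist_eq, max_le_iff]
    constructor
    · rw [edist_dist, Real.dist_eq]
      apply ENNReal.ofReal_le_ofReal
      rw [abs_le]
      constructor <;> linarith [hp1.1, hp1.2, hp1'.1, hp1'.2]
    · rw [edist_dist, Real.dist_eq]
      apply ENNReal.ofReal_le_ofReal
      rw [abs_le]
      constructor <;> linarith [hp2.1, hp2.2, hp2'.1, hp2'.2, henpos k]
  have hcover : ∀ k : ℕ,
      (E i ∩ Icc (-(R:ℝ)) R) ×ˢ (Icc (-(R:ℝ)) R) ⊆ ⋃ ab, t k ab := by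
    intro k
    rintro ⟨x, y⟩ ⟨⟨hxE, hxI⟩, hyI⟩
    have hn4 : n k % 4 = i := by simp only [hn]; omega
    obtain ⟨m, hm⟩ := hxE (n k) hn4
    simp only [mem_Icc] at hxI hyI
    have hxabs : |x| ≤ (R:ℝ) := abs_le.mpr ⟨hxI.1, hxI.2⟩
    have hen1 : en k ≤ 1 := q_le_one _
    have hmabs : |(m:ℝ)| * q (n k) ≤ (R:ℝ) + 1 := by
      have h1 : |(m:ℝ) * q (n k)| ≤ |x| + en k := by
        have h0 : (m:ℝ) * q (n k) = x - (x - m * q (n k)) := by ring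
        rw [h0]
        calc |x - (x - m * q (n k))| ≤ |x| + |x - m * q (n k)| := abs_sub _ _
          _ ≤ |x| + en k := by linarith [hm]
      rw [abs_mul, abs_of_pos (hqnpos k)] at h1
      linarith
    have hmK : |m| ≤ (K₁ k : ℤ) := by
      have h2 : |(m:ℝ)| ≤ ((R:ℝ)+1) / q (n k) := by
        rw [le_div_iff₀ (hqnpos k)]; exact hmabs
      have h3 : ((R:ℝ)+1) / q (n k) ≤ (K₁ k : ℝ) := Nat.le_ceil _
      have h4 : (|m| : ℝ) ≤ (K₁ k : ℝ) := by push_cast; linarith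
      exact_mod_cast h4
    have hmK' := abs_le.mp hmK
    -- the first index
    have haidx : (m + (K₁ k : ℤ)).toNat < 2 * K₁ k + 1 := by omega
    -- the second index
    have hynn : (0:ℝ) ≤ y + R := by linarith [hyI.1]
    have h2en : (0:ℝ) < 2 * en k := by linarith [henpos k]
    have hjle : ⌊(y + R)/(2 * en k)⌋₊ < K₂ k + 1 := by
      have h4 : (y + R)/(2 * en k) ≤ (R:ℝ)/en k := by
        rw [div_le_div_iff₀ h2en (henpos k)]
        nlinarith [hyI.2, henpos k]
      have h5 : ⌊(y + R)/(2 * en k)⌋₊ ≤ K₂ k := by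
        calc ⌊(y + R)/(2 * en k)⌋₊ ≤ ⌊(R:ℝ)/en k⌋₊ := Nat.floor_le_floor h4
          _ ≤ ⌈(R:ℝ)/en k⌉₊ := Nat.floor_le_ceil _
      omega
    refine mem_iUnion.mpr ⟨(⟨(m + (K₁ k : ℤ)).toNat, haidx⟩, ⟨⌊(y + R)/(2 * en k)⌋₊, hjle⟩),
      ?_, ?_⟩
    · -- x in the interval
      have hmm : ((((m + (K₁ k : ℤ)).toNat : ℕ) : ℝ) - (K₁ k : ℝ)) = (m : ℝ) := by
        have h6 : (((m + (K₁ k : ℤ)).toNat : ℕ) : ℤ) = m + (K₁ k : ℤ) :=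
          Int.toNat_of_nonneg (by omega)
        have h7 : (((m + (K₁ k : ℤ)).toNat : ℕ) : ℝ) = ((m : ℝ) + (K₁ k : ℝ)) := by
          exact_mod_cast congrArg (Int.cast : ℤ → ℝ) h6
        rw [h7]; ring
      simp only [mem_Icc]
      rw [hmm]
      have h8 := abs_le.mp hm
      constructor <;> linarith [h8.1, h8.2]
    · -- y in the interval
      have hfl : (⌊(y + R)/(2 * en k)⌋₊ : ℝ) ≤ (y + R)/(2 * en k) :=
        Nat.floor_le (by positivity)
      have hfu : (y + R)/(2 * en k) < ⌊(y + R)/(2 * en k)⌋₊ + 1 := Nat.lt_floor_add_one _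
      simp only [mem_Icc]
      constructor
      · have h9 := mul_le_mul_of_nonneg_right hfl h2en.le
        rw [div_mul_cancel₀ _ h2en.ne'] at h9
        nlinarith
      · have h9 := mul_lt_mul_of_pos_right hfu h2en
        rw [div_mul_cancel₀ _ h2en.ne'] at h9
        nlinarith
  have hmain : μH[d] ((E i ∩ Icc (-(R:ℝ)) R) ×ˢ (Icc (-(R:ℝ)) R))
      ≤ liminf (fun k => ∑ ab : Fin (2*K₁ k + 1) × Fin (K₂ k + 1),
          EMetric.diam (t k ab) ^ d) atTop := by
    apply MeasureTheory.Measure.hausdorffMeasure_le_liminf_sum d _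
      (fun k => ENNReal.ofReal (2 * en k))
    · -- tendsto 0
      rw [show (0:ℝ≥0∞) = ENNReal.ofReal 0 by simp]
      apply ENNReal.tendsto_ofReal
      apply squeeze_zero (fun k => by linarith [henpos k]) (fun k => ?_)
        (by simpa using (tendsto_pow_atTop_nhds_zero_of_lt_one (by norm_num : (0:ℝ) ≤ 1/2)
          (by norm_num : (1/2:ℝ) < 1)).const_mul 2)
      have h1 : en k ≤ (1/2:ℝ)^(n k + 2) := q_le_geom _
      have h2 : (1/2:ℝ)^(n k + 2) ≤ (1/2:ℝ)^k := by
        apply pow_le_pow_of_le_one (by norm_num) (by norm_num)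
        simp only [hn]; omega
      have h3 : ((2:ℝ)^k)⁻¹ = (1/2:ℝ)^k := by
        rw [← one_div, div_pow, one_pow]
      linarith
    · exact Eventually.of_forall fun k ab => hdiam k ab
    · exact Eventually.of_forall hcover
  -- Now bound the liminf by 0
  have hsumb : ∀ k, (∑ ab : Fin (2*K₁ k + 1) × Fin (K₂ k + 1),
      EMetric.diam (t k ab) ^ d)
      ≤ ENNReal.ofReal ((((2*K₁ k + 1) * (K₂ k + 1) : ℕ) : ℝ) * (2 * en k)^d) := by
    intro k
    calc (∑ ab : Fin (2*K₁ k + 1) × Fin (K₂ k + 1), EMetric.diam (t k ab) ^ d)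
        ≤ ∑ _ab : Fin (2*K₁ k + 1) × Fin (K₂ k + 1), ENNReal.ofReal (2 * en k) ^ d := by
          apply Finset.sum_le_sum
          intro ab _
          exact ENNReal.rpow_le_rpow (hdiam k ab) hd0
      _ = ((2*K₁ k + 1) * (K₂ k + 1) : ℕ) * ENNReal.ofReal (2 * en k) ^ d := by
          rw [Finset.sum_const, Finset.card_univ, Fintype.card_prod, Fintype.card_fin,
            Fintype.card_fin, nsmul_eq_mul]
      _ = ENNReal.ofReal ((((2*K₁ k + 1) * (K₂ k + 1) : ℕ) : ℝ) * (2 * en k)^d) := by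
          rw [ENNReal.ofReal_mul (Nat.cast_nonneg _), ENNReal.ofReal_natCast,
            ← ENNReal.ofReal_rpow_of_pos (show (0:ℝ) < 2 * en k by linarith [henpos k])]
  have hreal : Tendsto (fun k => (((2*K₁ k + 1) * (K₂ k + 1) : ℕ) : ℝ) * (2 * en k)^d)
      atTop (𝓝 0) := by
    have hub : ∀ k, (((2*K₁ k + 1) * (K₂ k + 1) : ℕ) : ℝ) * (2 * en k)^d
        ≤ (10 * ((R:ℝ)+1)^2 * (2:ℝ)^d) * ((en k)^(d-1) / q (n k)) := by
      intro k
      have hqn := hqnpos k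
      have hen' := henpos k
      have hen1 : en k ≤ 1 := q_le_one _
      have hqn1 : q (n k) ≤ 1 := q_le_one _
      have hR0 : (0:ℝ) ≤ (R:ℝ) := Nat.cast_nonneg R
      have hR1 : (1:ℝ) ≤ (R:ℝ)+1 := by linarith
      have hK1b : (K₁ k : ℝ) ≤ ((R:ℝ)+1)/q (n k) + 1 := by
        have := Nat.ceil_lt_add_one (by positivity : (0:ℝ) ≤ ((R:ℝ)+1)/q (n k))
        linarith
      have hK2b : (K₂ k : ℝ) ≤ (R:ℝ)/en k + 1 := by
        have := Nat.ceil_lt_add_one (by positivity : (0:ℝ) ≤ (R:ℝ)/en k)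
        linarith
      have hb1' : ((2*K₁ k + 1 : ℕ) : ℝ) * q (n k) ≤ 5 * ((R:ℝ)+1) := by
        have h7 := mul_le_mul_of_nonneg_right hK1b hqn.le
        rw [add_mul, div_mul_cancel₀ _ hqn.ne', one_mul] at h7
        push_cast
        linarith [h7]
      have hb2' : ((K₂ k + 1 : ℕ) : ℝ) * en k ≤ 2 * ((R:ℝ)+1) := by
        have h7 := mul_le_mul_of_nonneg_right hK2b hen'.le
        rw [add_mul, div_mul_cancel₀ _ hen'.ne', one_mul] at h7
        push_cast
        linarith [h7]
      have hA : (0:ℝ) < en k ^ (d-1) := Real.rpow_pos_of_pos hen' _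
      have h2d : (0:ℝ) < (2:ℝ)^d := Real.rpow_pos_of_pos (by norm_num) _
      have hprod : ((2*K₁ k + 1 : ℕ) : ℝ) * ((K₂ k + 1 : ℕ) : ℝ) * (en k * q (n k))
          ≤ 10 * ((R:ℝ)+1)^2 := by
        have h10 := mul_le_mul hb1' hb2'
          (mul_nonneg (Nat.cast_nonneg _) hen'.le) (by linarith)
        calc ((2*K₁ k + 1 : ℕ) : ℝ) * ((K₂ k + 1 : ℕ) : ℝ) * (en k * q (n k))
            = (((2*K₁ k + 1 : ℕ) : ℝ) * q (n k)) * (((K₂ k + 1 : ℕ) : ℝ) * en k) := by ring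
          _ ≤ (5 * ((R:ℝ)+1)) * (2 * ((R:ℝ)+1)) := h10
          _ = 10 * ((R:ℝ)+1)^2 := by ring
      have hsplit : (2 * en k)^d = (2:ℝ)^d * (en k^(d-1) * en k) := by
        rw [Real.mul_rpow (by norm_num) hen'.le]
        congr 1
        nth_rewrite 1 [show d = (d-1)+1 by ring]
        rw [Real.rpow_add_one hen'.ne']
      rw [← mul_div_assoc, le_div_iff₀ hqn, hsplit]
      have hcast : (((2*K₁ k + 1) * (K₂ k + 1) : ℕ) : ℝ)
          = ((2*K₁ k + 1 : ℕ) : ℝ) * ((K₂ k + 1 : ℕ) : ℝ) := by push_cast; ring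
      rw [hcast]
      linarith [mul_le_mul_of_nonneg_right hprod (mul_pos h2d hA).le]
    apply squeeze_zero (fun k => ?_) hub
    · simpa using (tendsto_ratio i d hd).const_mul (10 * ((R:ℝ)+1)^2 * (2:ℝ)^d)
    · exact mul_nonneg (Nat.cast_nonneg _) (Real.rpow_nonneg (by linarith [henpos k]) d)
  have hlim : liminf (fun k => ENNReal.ofReal
      ((((2*K₁ k + 1) * (K₂ k + 1) : ℕ) : ℝ) * (2 * en k)^d)) atTop = 0 := by
    have h11 := (ENNReal.tendsto_ofReal hreal).liminf_eq
    simpa using h11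
  refine le_antisymm ?_ zero_le
  calc μH[d] ((E i ∩ Icc (-(R:ℝ)) R) ×ˢ (Icc (-(R:ℝ)) R))
      ≤ liminf (fun k => ∑ ab : Fin (2*K₁ k + 1) × Fin (K₂ k + 1),
          EMetric.diam (t k ab) ^ d) atTop := hmain
    _ ≤ liminf (fun k => ENNReal.ofReal
          ((((2*K₁ k + 1) * (K₂ k + 1) : ℕ) : ℝ) * (2 * en k)^d)) atTop :=
        liminf_le_liminf (Eventually.of_forall hsumb)
    _ = 0 := hlim

theorem dimH_trunc (i : ℕ) (hi : i < 4) (R : ℕ) :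
    dimH ((E i ∩ Icc (-(R:ℝ)) R) ×ˢ (Icc (-(R:ℝ)) R)) ≤ 1 := by
  apply dimH_le
  intro d' hinf
  by_contra hgt
  push_neg at hgt
  have h1 : (1:ℝ) < (d' : ℝ) := by
    have : (1:ℝ≥0) < d' := by exact_mod_cast hgt
    exact_mod_cast this
  rw [hausdorff_piece i hi (d' : ℝ) h1 R] at hinf
  exact (ENNReal.zero_ne_top) hinf

theorem dimH_piece (i : ℕ) (hi : i < 4) : dimH (E i ×ˢ (univ : Set ℝ)) ≤ 1 := by
  have hsub : E i ×ˢ (univ : Set ℝ)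
      ⊆ ⋃ R : ℕ, (E i ∩ Icc (-(R:ℝ)) R) ×ˢ (Icc (-(R:ℝ)) R) := by
    rintro ⟨x, y⟩ ⟨hx, -⟩
    refine mem_iUnion.mpr ⟨⌈max |x| |y|⌉₊, ⟨⟨hx, ?_⟩, ?_⟩⟩
    · have h1 : |x| ≤ (⌈max |x| |y|⌉₊ : ℝ) :=
        le_trans (le_max_left _ _) (Nat.le_ceil _)
      exact mem_Icc.mpr (abs_le.mp h1)
    · have h1 : |y| ≤ (⌈max |x| |y|⌉₊ : ℝ) :=
        le_trans (le_max_right _ _) (Nat.le_ceil _)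
      exact mem_Icc.mpr (abs_le.mp h1)
  calc dimH (E i ×ˢ (univ : Set ℝ))
      ≤ dimH (⋃ R : ℕ, (E i ∩ Icc (-(R:ℝ)) R) ×ˢ (Icc (-(R:ℝ)) R)) := dimH_mono hsub
    _ = ⨆ R : ℕ, dimH ((E i ∩ Icc (-(R:ℝ)) R) ×ˢ (Icc (-(R:ℝ)) R)) := dimH_iUnion _
    _ ≤ 1 := iSup_le fun R => dimH_trunc i hi R

lemma isometry_swap : Isometry (Prod.swap : ℝ × ℝ → ℝ × ℝ) := by
  intro p q
  rw [Prod.edist_eq, Prod.edist_eq]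
  exact max_comm _ _

theorem dimH_C_prod : dimH (C ×ˢ (univ : Set ℝ)) ≤ 1 := by
  have hC : C ×ˢ (univ : Set ℝ)
      = (E 0 ×ˢ (univ : Set ℝ)) ∪ ((E 1 ×ˢ (univ : Set ℝ))
        ∪ ((E 2 ×ˢ (univ : Set ℝ)) ∪ (E 3 ×ˢ (univ : Set ℝ)))) := by
    unfold C
    rw [Set.union_prod, Set.union_prod, Set.union_prod]
    ac_rfl
  rw [hC, dimH_union, dimH_union, dimH_union]
  simp only [max_le_iff]
  exact ⟨dimH_piece 0 (by norm_num), dimH_piece 1 (by norm_num),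
    dimH_piece 2 (by norm_num), dimH_piece 3 (by norm_num)⟩

theorem dimH_B : dimH B = 1 := by
  refine le_antisymm ?_ ?_
  · unfold B
    rw [dimH_union]
    simp only [max_le_iff]
    refine ⟨dimH_C_prod, ?_⟩
    have hswap : (univ : Set ℝ) ×ˢ C = Prod.swap '' (C ×ˢ (univ : Set ℝ)) := by
      rw [Set.image_swap_prod]
    rw [hswap, isometry_swap.dimH_image]
    exact dimH_C_prod
  · have hline : ({0} : Set ℝ) ×ˢ (univ : Set ℝ) ⊆ B := by
      rintro ⟨x, y⟩ ⟨hx, -⟩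
      have hx0 : x = 0 := by simpa using hx
      exact Or.inl ⟨by rw [hx0]; exact zero_mem_C, trivial⟩
    have hiso : Isometry (fun y : ℝ => ((0:ℝ), y)) := by
      intro y1 y2
      rw [Prod.edist_eq]
      simp
    have himg : (fun y : ℝ => ((0:ℝ), y)) '' univ = ({0} : Set ℝ) ×ˢ (univ : Set ℝ) := by
      ext ⟨a, b⟩
      simp [eq_comm]
    calc (1 : ℝ≥0∞) = dimH (univ : Set ℝ) := Real.dimH_univ.symm
      _ = dimH ((fun y : ℝ => ((0:ℝ), y)) '' univ) := (hiso.dimH_image _).symm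
      _ = dimH (({0} : Set ℝ) ×ˢ (univ : Set ℝ)) := by rw [himg]
      _ ≤ dimH B := dimH_mono hline

end

end SqAux

/-- The boundary of the axes-parallel square with center `c` and radius `r`. -/
def sqBdry (c : ℝ × ℝ) (r : ℝ) : Set (ℝ × ℝ) :=
  {p : ℝ × ℝ | max |p.1 - c.1| |p.2 - c.2| = r}

theorem stmt0 : ∃ B : Set (ℝ × ℝ), IsClosed B ∧ dimH B = 1 ∧
    ∀ x y : ℝ, ∃ r > (0 : ℝ), sqBdry (x, y) r ⊆ B := by
  refine ⟨SqAux.B, SqAux.isClosed_B, SqAux.dimH_B, fun x y => ?_⟩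
  obtain ⟨r, hr, h0, h1, h2, h3⟩ := SqAux.exists_radius x y
  refine ⟨r, by linarith, fun p hp => ?_⟩
  have hp' : max |p.1 - x| |p.2 - y| = r := hp
  have hC : ∀ z : ℝ, |z| = r → (x + z ∈ SqAux.C → True) := fun _ _ _ => trivial
  rcases max_choice |p.1 - x| |p.2 - y| with h | h <;> rw [h] at hp'
  · left
    refine ⟨?_, trivial⟩
    rcases abs_eq (by linarith : (0:ℝ) ≤ r) |>.mp hp' with h' | h'
    · have : p.1 = x + r := by linarith
      rw [this]
      exact Or.inl (Or.inl (Or.inl (by rwa [add_comm])))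
    · have : p.1 = -(r - x) := by linarith
      rw [this]
      exact Or.inl (Or.inl (Or.inr (SqAux.neg_mem_E h1)))
  · right
    refine ⟨trivial, ?_⟩
    rcases abs_eq (by linarith : (0:ℝ) ≤ r) |>.mp hp' with h' | h'
    · have : p.2 = y + r := by linarith
      rw [this]
      exact Or.inl (Or.inr (by rwa [add_comm]))
    · have : p.2 = -(r - y) := by linarith
      rw [this]
      exact Or.inr (SqAux.neg_mem_E h3)
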